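/- With d_k(u,v,n) as above, the recurrence d_{(2k+2)_{ab}}(u,v,n) = d_{(2k+1)_b}(u,v,n) + d_{(2k)_a}(u−1, v−1, n−2k−2) + d_{(2k−1)_a}(u−1, v−2, n−4k−2) holds for all u,v ∈ ℕ and k,n ≥ 1. -/

import Mathlib

/-- The five colours a, b, ab, a², b². -/
inductive Col where
  | a | b | ab | aa | bb
deriving DecidableEq, Inhabited

open Col

/-- Position of a coloured integer in the ordering
1_{ab} < 1_a < 1_{b²} < 1_b < 2_{ab} < 2_a < 3_{a²} < 2_b < 3_{ab} < ⋯ . -/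
def colPos : ℕ × Col → ℕ
  | (k, Col.ab) => 4 * k - 4
  | (k, Col.a)  => 4 * k - 3
  | (k, Col.bb) => 4 * k - 2
  | (k, Col.b)  => 4 * k - 1
  | (k, Col.aa) => 4 * k - 6

/-- Entry of the matrix A: minimal gap below a part of size `k` and colour `x`,
above a part of colour `y`. -/
def colMinGap (k : ℕ) (x y : Col) : ℕ :=
  match x, y with
  | Col.a, y => if k % 2 = 1 then
      (match y with | Col.ab => 1 | _ => 2)
    else
      (match y with | Col.aa => 3 | Col.bb => 3 | _ => 2)
  | Col.bb, y => (match y with | Col.b => 3 | Col.bb => 4 | _ => 2)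
  | Col.b, y => if k % 2 = 1 then
      (match y with | Col.a => 1 | Col.ab => 1 | _ => 2)
    else
      (match y with | Col.a => 1 | Col.ab => 1 | Col.aa => 1 | Col.bb => 3 | _ => 2)
  | Col.ab, y => if k % 2 = 0 then
      (match y with | Col.aa => 3 | Col.bb => 3 | _ => 2)
    else
      (match y with | Col.b => 3 | Col.bb => 3 | _ => 2)
  | Col.aa, y => (match y with | Col.aa => 4 | Col.bb => 4 | _ => 3)

/-- A coloured partition as in the non-dilated Siladić theorem: parts are coloured
positive integers, squared colours only occur on odd integers, there is no part
1_{ab} or 1_{b²}, and consecutive parts satisfy the gap conditions of matrix A. -/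
def IsColPartition (l : List (ℕ × Col)) : Prop :=
  (∀ p ∈ l, 1 ≤ p.1 ∧ ((p.2 = Col.aa ∨ p.2 = Col.bb) → p.1 % 2 = 1) ∧
    p ≠ (1, Col.ab) ∧ p ≠ (1, Col.bb)) ∧
  ∀ i, i + 1 < l.length →
    l[i]!.1 ≥ l[i+1]!.1 + colMinGap l[i]!.1 l[i]!.2 l[i+1]!.2

/-- Number of parts coloured a or ab, plus twice the number of parts coloured a². -/
def aCt (l : List (ℕ × Col)) : ℕ :=
  (l.countP fun p => p.2 == Col.a || p.2 == Col.ab) +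
    2 * (l.countP fun p => p.2 == Col.aa)

/-- Number of parts coloured b or ab, plus twice the number of parts coloured b². -/
def bCt (l : List (ℕ × Col)) : ℕ :=
  (l.countP fun p => p.2 == Col.b || p.2 == Col.ab) +
    2 * (l.countP fun p => p.2 == Col.bb)

/-- D(u,v,n): coloured partitions of n with a-count u and b-count v. -/
noncomputable def Dct (u v n : ℕ) : ℕ :=
  Nat.card {l : List (ℕ × Col) // IsColPartition l ∧
    (l.map Prod.fst).sum = n ∧ aCt l = u ∧ bCt l = v}

/-- d_K(u,v,n): as D(u,v,n) but with largest part at most K in the coloured order;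
integer arguments (negative values give 0). -/
noncomputable def dct (K : ℕ × Col) (u v n : ℤ) : ℕ :=
  Nat.card {l : List (ℕ × Col) // IsColPartition l ∧
    (∀ p ∈ l, colPos p ≤ colPos K) ∧
    ((l.map Prod.fst).sum : ℤ) = n ∧ (aCt l : ℤ) = u ∧ (bCt l : ℤ) = v}

/-- e_K(u,v,n): as d_K(u,v,n) but with largest part exactly K. -/
noncomputable def ect (K : ℕ × Col) (u v n : ℤ) : ℕ :=
  Nat.card {l : List (ℕ × Col) // IsColPartition l ∧
    (∀ p ∈ l, colPos p ≤ colPos K) ∧ l ≠ [] ∧ l.head! = K ∧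
    ((l.map Prod.fst).sum : ℤ) = n ∧ (aCt l : ℤ) = u ∧ (bCt l : ℤ) = v}

/-- The generating function G_K(a,b,q) = 1 + ∑_{u,v≥0,n≥1} d_K(u,v,n) aᵘbᵛqⁿ,
as a formal power series in the variables a = X 0, b = X 1, q = X 2. -/
noncomputable def Gf (K : ℕ × Col) : MvPowerSeries (Fin 3) ℚ :=
  fun e => (dct K (e 0) (e 1) (e 2) : ℚ)


/-! ### Auxiliary lemmas -/

section Aux

instance : Fintype Col :=
  ⟨{Col.a, Col.b, Col.ab, Col.aa, Col.bb}, by intro x; cases x <;> simp⟩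

/-- A valid single part. -/
def Valid (p : ℕ × Col) : Prop :=
  1 ≤ p.1 ∧ ((p.2 = Col.aa ∨ p.2 = Col.bb) → p.1 % 2 = 1) ∧
    p ≠ (1, Col.ab) ∧ p ≠ (1, Col.bb)

lemma gap_ge_one (m : ℕ) (x y : Col) : 1 ≤ colMinGap m x y := by
  cases x <;> cases y <;> rw [colMinGap.eq_def] <;> simp <;> split <;> omega

lemma gap_ab_ge_two (m : ℕ) (y : Col) : 2 ≤ colMinGap m Col.ab y := by
  cases y <;> rw [colMinGap.eq_def] <;> simp <;> split <;> omega

lemma isCP_nil : IsColPartition [] := by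
  constructor
  · intro p hp; simp at hp
  · intro i hi; simp at hi

lemma isCP_cons (x : ℕ × Col) (l : List (ℕ × Col)) :
    IsColPartition (x :: l) ↔
      Valid x ∧ IsColPartition l ∧ ∀ z ∈ l.head?, z.1 + colMinGap x.1 x.2 z.2 ≤ x.1 := by
  constructor
  · rintro ⟨h1, h2⟩
    refine ⟨h1 x List.mem_cons_self,
      ⟨fun p hp => h1 p (List.mem_cons_of_mem _ hp), ?_⟩, ?_⟩
    · intro i hi
      have := h2 (i+1) (by simpa using Nat.succ_lt_succ hi)
      simpa using this
    · intro z hz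
      cases l with
      | nil => simp at hz
      | cons y t =>
        simp at hz
        subst hz
        have := h2 0 (by simp)
        simpa using this
  · rintro ⟨hv, ⟨h1, h2⟩, h3⟩
    refine ⟨?_, ?_⟩
    · intro p hp
      rcases List.mem_cons.mp hp with rfl | hp
      · exact hv
      · exact h1 p hp
    · intro i hi
      cases i with
      | zero =>
        cases l with
        | nil => simp at hi
        | cons y t =>
          have := h3 y (by simp)
          simpa using this
      | succ j =>
        have := h2 j (by simpa using hi)
        simpa using this

lemma isCP_lt {x : ℕ × Col} {l : List (ℕ × Col)} (h : IsColPartition (x :: l)) :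
    ∀ p ∈ l, p.1 < x.1 := by
  induction l generalizing x with
  | nil => simp
  | cons y t ih =>
    rw [isCP_cons] at h
    obtain ⟨hv, hcp, hgap⟩ := h
    have hy : y.1 < x.1 := by
      have h1 := hgap y (by simp)
      have h2 := gap_ge_one x.1 x.2 y.2
      omega
    intro p hp
    rcases List.mem_cons.mp hp with rfl | hp
    · exact hy
    · exact lt_trans (ih hcp p hp) hy

/-! ### Arithmetic facts about positions and gaps -/

lemma colPos_le (p : ℕ × Col) : colPos p ≤ 4 * p.1 - 1 := by
  obtain ⟨m, c⟩ := p
  cases c <;> simp only [colPos] <;> omega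

lemma P1 (k : ℕ) (p : ℕ × Col) (hv : Valid p)
    (hb : colPos p ≤ colPos (2*k+2, Col.ab)) (hne : p ≠ (2*k+2, Col.ab)) :
    p.1 ≤ 2*k+1 := by
  obtain ⟨m, c⟩ := p
  obtain ⟨h1, h2, -⟩ := hv
  have hne' : m ≠ 2*k+2 ∨ ¬ (c = Col.ab) := by
    by_contra h
    push_neg at h
    exact hne (by rw [h.1, h.2])
  cases c <;> simp only [colPos] at hb <;> simp at h2 hne' <;> omega

lemma P2 (k : ℕ) (hk : 1 ≤ k) (z : ℕ × Col) (hv : Valid z)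
    (hg : z.1 + colMinGap (2*k+2) Col.ab z.2 ≤ 2*k+2) (hne : z ≠ (2*k, Col.b)) :
    colPos z ≤ colPos (2*k, Col.a) := by
  obtain ⟨m, c⟩ := z
  obtain ⟨h1, h2, -⟩ := hv
  have he : (2*k+2) % 2 = 0 := by omega
  have hne' : m ≠ 2*k ∨ ¬ (c = Col.b) := by
    by_contra h
    push_neg at h
    exact hne (by rw [h.1, h.2])
  cases c <;> simp only [colPos] <;>
    simp only [colMinGap.eq_def, he, reduceIte] at hg <;> simp at h2 hne' <;> omega

lemma P2' (k : ℕ) (hk : 1 ≤ k) (z : ℕ × Col) (hv : Valid z)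
    (hb : colPos z ≤ colPos (2*k, Col.a)) :
    z.1 + colMinGap (2*k+2) Col.ab z.2 ≤ 2*k+2 := by
  obtain ⟨m, c⟩ := z
  obtain ⟨h1, h2, -⟩ := hv
  have he : (2*k+2) % 2 = 0 := by omega
  cases c <;> simp only [colPos] at hb <;>
    simp only [colMinGap.eq_def, he, reduceIte] <;> simp at h2 ⊢ <;> omega

lemma P3 (k : ℕ) (hk : 1 ≤ k) (z : ℕ × Col) (hv : Valid z)
    (hg : z.1 + colMinGap (2*k) Col.b z.2 ≤ 2*k) :
    colPos z ≤ colPos (2*k-1, Col.a) := by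
  obtain ⟨m, c⟩ := z
  obtain ⟨h1, h2, -⟩ := hv
  have he : ¬ ((2*k) % 2 = 1) := by omega
  cases c <;> simp only [colPos] <;>
    simp only [colMinGap.eq_def, he, reduceIte] at hg <;> simp at h2 <;> omega

lemma P3' (k : ℕ) (hk : 1 ≤ k) (z : ℕ × Col) (hv : Valid z)
    (hb : colPos z ≤ colPos (2*k-1, Col.a)) :
    z.1 + colMinGap (2*k) Col.b z.2 ≤ 2*k := by
  obtain ⟨m, c⟩ := z
  obtain ⟨h1, h2, -⟩ := hv
  have he : ¬ ((2*k) % 2 = 1) := by omega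
  cases c <;> simp only [colPos] at hb <;>
    simp only [colMinGap.eq_def, he, reduceIte] <;> simp at h2 ⊢ <;> omega

lemma gap_ab_b_even (k : ℕ) : colMinGap (2*k+2) Col.ab Col.b = 2 := by
  have he : (2*k+2) % 2 = 0 := by omega
  simp only [colMinGap.eq_def, he, reduceIte]

/-! ### Count lemmas -/

lemma aCt_nil : aCt [] = 0 := rfl
lemma bCt_nil : bCt [] = 0 := rfl

lemma aCt_cons_ab (m : ℕ) (l : List (ℕ × Col)) :
    aCt ((m, Col.ab) :: l) = aCt l + 1 := by
  simp [aCt, List.countP_cons]; omega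

lemma bCt_cons_ab (m : ℕ) (l : List (ℕ × Col)) :
    bCt ((m, Col.ab) :: l) = bCt l + 1 := by
  simp [bCt, List.countP_cons]; omega

lemma aCt_cons_b (m : ℕ) (l : List (ℕ × Col)) :
    aCt ((m, Col.b) :: l) = aCt l := by
  simp [aCt, List.countP_cons]

lemma bCt_cons_b (m : ℕ) (l : List (ℕ × Col)) :
    bCt ((m, Col.b) :: l) = bCt l + 1 := by
  simp [bCt, List.countP_cons]; omega

/-! ### Finiteness -/

/-- The set underlying `dct`. -/
def SetD (K : ℕ × Col) (u v n : ℤ) : Set (List (ℕ × Col)) :=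
  {l : List (ℕ × Col) | IsColPartition l ∧ (∀ p ∈ l, colPos p ≤ colPos K) ∧
    ((l.map Prod.fst).sum : ℤ) = n ∧ (aCt l : ℤ) = u ∧ (bCt l : ℤ) = v}

lemma dct_eq_ncard (K : ℕ × Col) (u v n : ℤ) :
    dct K u v n = (SetD K u v n).ncard :=
  Nat.card_coe_set_eq _

lemma finite_lists (s : Set (ℕ × Col)) (hs : s.Finite) (N : ℕ) :
    {l : List (ℕ × Col) | l.length ≤ N ∧ ∀ x ∈ l, x ∈ s}.Finite := by
  induction N with
  | zero =>
    apply Set.Finite.subset (Set.finite_singleton ([] : List (ℕ × Col)))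
    rintro l ⟨hl, -⟩
    simp [List.length_eq_zero_iff.mp (Nat.le_zero.mp hl)]
  | succ N ih =>
    apply Set.Finite.subset
      (Set.Finite.insert []
        ((hs.prod ih).image (fun q : (ℕ × Col) × List (ℕ × Col) => q.1 :: q.2)))
    rintro l ⟨hl, hm⟩
    cases l with
    | nil => exact Set.mem_insert _ _
    | cons x t =>
      refine Set.mem_insert_of_mem _ ⟨(x, t), ⟨hm x (by simp), ?_, ?_⟩, rfl⟩
      · have : t.length ≤ N := by simpa [Nat.succ_le_succ_iff] using hl
        exact this
      · intro y hy; exact hm y (List.mem_cons_of_mem _ hy)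

lemma dctSet_finite (K : ℕ × Col) (u v n : ℤ) : (SetD K u v n).Finite := by
  apply Set.Finite.subset
    (finite_lists ((Set.Icc 1 n.toNat) ×ˢ (Set.univ : Set Col))
      ((Set.finite_Icc _ _).prod Set.finite_univ) n.toNat)
  rintro l ⟨⟨h1, -⟩, -, hsum, -⟩
  have hs : (l.map Prod.fst).sum = n.toNat := by omega
  constructor
  · calc l.length = (l.map Prod.fst).length := by simp
    _ ≤ (l.map Prod.fst).sum := List.length_le_sum_of_one_le _ (by
        intro i hi
        obtain ⟨p, hp, rfl⟩ := List.mem_map.mp hi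
        exact (h1 p hp).1)
    _ = n.toNat := hs
  · intro x hx
    refine ⟨⟨(h1 x hx).1, ?_⟩, Set.mem_univ _⟩
    rw [← hs]
    exact List.single_le_sum (fun i _ => Nat.zero_le i) _ (List.mem_map_of_mem hx)

end Aux

/-! ### The main decomposition -/

lemma main_split (u v k n : ℕ) (hk : 1 ≤ k) (hn : 1 ≤ n) :
    SetD (2*k+2, Col.ab) (u : ℤ) (v : ℤ) (n : ℤ) =
    SetD (2*k+1, Col.b) (u : ℤ) (v : ℤ) (n : ℤ) ∪
    ((((2*k+2, Col.ab)) :: ·) ''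
        SetD (2*k, Col.a) ((u : ℤ) - 1) ((v : ℤ) - 1) ((n : ℤ) - (2*k+2)) ∪
      (fun l => (2*k+2, Col.ab) :: (2*k, Col.b) :: l) ''
        SetD (2*k-1, Col.a) ((u : ℤ) - 1) ((v : ℤ) - 2) ((n : ℤ) - (4*k+2))) := by
  have hv1 : colPos (2*k+1, Col.b) = 4*(2*k+1)-1 := rfl
  have hv2 : colPos (2*k+2, Col.ab) = 4*(2*k+2)-4 := rfl
  have hv3 : colPos (2*k, Col.a) = 4*(2*k)-3 := rfl
  have hv4 : colPos (2*k-1, Col.a) = 4*(2*k-1)-3 := rfl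
  have hvb : colPos (2*k, Col.b) = 4*(2*k)-1 := rfl
  ext l
  simp only [SetD, Set.mem_union, Set.mem_image, Set.mem_setOf_eq]
  constructor
  · rintro ⟨hcp, hbd, hsum, ha, hb⟩
    cases l with
    | nil =>
      exfalso
      simp at hsum
      omega
    | cons x l' =>
      by_cases hx : x = (2*k+2, Col.ab)
      · subst hx
        rw [isCP_cons] at hcp
        obtain ⟨hvx, hcp', hgap⟩ := hcp
        cases l' with
        | nil =>
          refine Or.inr (Or.inl ⟨[], ⟨isCP_nil, by simp, ?_, ?_, ?_⟩, rfl⟩)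
          · simp at hsum ⊢
            omega
          · rw [aCt_cons_ab, aCt_nil] at ha
            rw [aCt_nil]
            push_cast at ha ⊢
            omega
          · rw [bCt_cons_ab, bCt_nil] at hb
            rw [bCt_nil]
            push_cast at hb ⊢
            omega
        | cons y l'' =>
          have hgy : y.1 + colMinGap (2*k+2) Col.ab y.2 ≤ 2*k+2 := hgap y (by simp)
          by_cases hy : y = (2*k, Col.b)
          · subst hy
            rw [isCP_cons] at hcp'
            obtain ⟨hvy, hcp'', hgap'⟩ := hcp'
            refine Or.inr (Or.inr ⟨l'', ⟨hcp'', ?_, ?_, ?_, ?_⟩, rfl⟩)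
            · intro p hp
              cases l'' with
              | nil => simp at hp
              | cons z rest =>
                have hz : z.1 + colMinGap (2*k) Col.b z.2 ≤ 2*k := hgap' z (by simp)
                rcases List.mem_cons.mp hp with rfl | hp'
                · exact P3 k hk p (hcp''.1 _ (by simp)) hz
                · have h1 : p.1 < z.1 := isCP_lt hcp'' p hp'
                  have h2 := gap_ge_one (2*k) Col.b z.2
                  have h3 := colPos_le p
                  omega
            · simp only [List.map_cons, List.sum_cons] at hsum
              push_cast at hsum ⊢
              omega
            · rw [aCt_cons_ab, aCt_cons_b] at ha
              push_cast at ha ⊢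
              omega
            · rw [bCt_cons_ab, bCt_cons_b] at hb
              push_cast at hb ⊢
              omega
          · refine Or.inr (Or.inl ⟨y :: l'', ⟨hcp', ?_, ?_, ?_, ?_⟩, rfl⟩)
            · intro p hp
              rcases List.mem_cons.mp hp with rfl | hp'
              · exact P2 k hk p (hcp'.1 _ (by simp)) hgy hy
              · have h1 : p.1 < y.1 := isCP_lt hcp' p hp'
                have h2 := gap_ab_ge_two (2*k+2) y.2
                have h3 := colPos_le p
                omega
            · simp only [List.map_cons, List.sum_cons] at hsum ⊢
              push_cast at hsum ⊢
              omega
            · rw [aCt_cons_ab] at ha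
              push_cast at ha ⊢
              omega
            · rw [bCt_cons_ab] at hb
              push_cast at hb ⊢
              omega
      · left
        have hvx : Valid x := hcp.1 x (by simp)
        have hx1 : x.1 ≤ 2*k+1 := P1 k x hvx (hbd x (by simp)) hx
        refine ⟨hcp, ?_, hsum, ha, hb⟩
        intro p hp
        have hp1 : p.1 ≤ 2*k+1 := by
          rcases List.mem_cons.mp hp with rfl | hp'
          · exact hx1
          · have := isCP_lt hcp p hp'
            omega
        have := colPos_le p
        omega
  · rintro (⟨hcp, hbd, hsum, ha, hb⟩ | ⟨l', ⟨hcp, hbd, hsum, ha, hb⟩, rfl⟩ |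
      ⟨l', ⟨hcp, hbd, hsum, ha, hb⟩, rfl⟩)
    · refine ⟨hcp, ?_, hsum, ha, hb⟩
      intro p hp
      have := hbd p hp
      omega
    · have hvK : Valid (2*k+2, Col.ab) := by
        refine ⟨by omega, by simp, ?_, by simp⟩
        simp only [ne_eq, Prod.mk.injEq, not_and]
        intro h
        omega
      refine ⟨?_, ?_, ?_, ?_, ?_⟩
      · rw [isCP_cons]
        refine ⟨hvK, hcp, ?_⟩
        intro z hz
        have hz' : z ∈ l' := List.mem_of_mem_head? hz
        exact P2' k hk z (hcp.1 z hz') (hbd z hz')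
      · intro p hp
        rcases List.mem_cons.mp hp with rfl | hp'
        · exact le_refl _
        · have := hbd p hp'
          omega
      · simp only [List.map_cons, List.sum_cons]
        push_cast at hsum ⊢
        omega
      · rw [aCt_cons_ab]
        push_cast at ha ⊢
        omega
      · rw [bCt_cons_ab]
        push_cast at hb ⊢
        omega
    · have hvK : Valid (2*k+2, Col.ab) := by
        refine ⟨by omega, by simp, ?_, by simp⟩
        simp only [ne_eq, Prod.mk.injEq, not_and]
        intro h
        omega
      have hvY : Valid (2*k, Col.b) := by
        refine ⟨by omega, by simp, by simp, by simp⟩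
      refine ⟨?_, ?_, ?_, ?_, ?_⟩
      · rw [isCP_cons]
        refine ⟨hvK, ?_, ?_⟩
        · rw [isCP_cons]
          refine ⟨hvY, hcp, ?_⟩
          intro z hz
          have hz' : z ∈ l' := List.mem_of_mem_head? hz
          exact P3' k hk z (hcp.1 z hz') (hbd z hz')
        · intro z hz
          simp only [List.head?_cons, Option.mem_some_iff] at hz
          subst hz
          simp only [gap_ab_b_even]
          omega
      · intro p hp
        rcases List.mem_cons.mp hp with rfl | hp'
        · exact le_refl _
        · rcases List.mem_cons.mp hp' with rfl | hp''
          · omega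
          · have := hbd p hp''
            omega
      · simp only [List.map_cons, List.sum_cons]
        push_cast at hsum ⊢
        omega
      · rw [aCt_cons_ab, aCt_cons_b]
        push_cast at ha ⊢
        omega
      · rw [bCt_cons_ab, bCt_cons_b]
        push_cast at hb ⊢
        omega

/-- Recurrence (3.5): d_{(2k+2)_{ab}}(u,v,n) = d_{(2k+1)_b}(u,v,n)
+ d_{(2k)_a}(u-1,v-1,n-2k-2) + d_{(2k-1)_a}(u-1,v-2,n-4k-2). -/
theorem recurrence_eqd5 (u v k n : ℕ) (hk : 1 ≤ k) (hn : 1 ≤ n) :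
    dct (2*k+2, Col.ab) u v n =
      dct (2*k+1, Col.b) u v n +
      dct (2*k, Col.a) ((u : ℤ) - 1) ((v : ℤ) - 1) ((n : ℤ) - (2*k+2)) +
      dct (2*k-1, Col.a) ((u : ℤ) - 1) ((v : ℤ) - 2) ((n : ℤ) - (4*k+2)) := by
  have injf : Function.Injective
      ((((2*k+2, Col.ab)) :: ·) : List (ℕ × Col) → List (ℕ × Col)) :=
    fun a b h => by simpa using h
  have injg : Function.Injective
      (fun l : List (ℕ × Col) => (2*k+2, Col.ab) :: (2*k, Col.b) :: l) :=
    fun a b h => by simpa using h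
  have finA := dctSet_finite (2*k+1, Col.b) (u : ℤ) (v : ℤ) (n : ℤ)
  have finB := (dctSet_finite (2*k, Col.a) ((u : ℤ) - 1) ((v : ℤ) - 1)
    ((n : ℤ) - (2*k+2))).image (((2*k+2, Col.ab)) :: ·)
  have finC := (dctSet_finite (2*k-1, Col.a) ((u : ℤ) - 1) ((v : ℤ) - 2)
    ((n : ℤ) - (4*k+2))).image (fun l => (2*k+2, Col.ab) :: (2*k, Col.b) :: l)
  have disj1 : Disjoint (SetD (2*k+1, Col.b) (u : ℤ) (v : ℤ) (n : ℤ))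
      (((((2*k+2, Col.ab)) :: ·) ''
          SetD (2*k, Col.a) ((u : ℤ) - 1) ((v : ℤ) - 1) ((n : ℤ) - (2*k+2))) ∪
        ((fun l => (2*k+2, Col.ab) :: (2*k, Col.b) :: l) ''
          SetD (2*k-1, Col.a) ((u : ℤ) - 1) ((v : ℤ) - 2) ((n : ℤ) - (4*k+2)))) := by
    rw [Set.disjoint_left]
    rintro l ⟨-, hbd, -⟩ (⟨l', -, rfl⟩ | ⟨l', -, rfl⟩) <;>
    · have h := hbd (2*k+2, Col.ab) (by simp)
      have hv1 : colPos (2*k+1, Col.b) = 4*(2*k+1)-1 := rfl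
      have hv2 : colPos (2*k+2, Col.ab) = 4*(2*k+2)-4 := rfl
      omega
  have disj2 : Disjoint
      ((((2*k+2, Col.ab)) :: ·) ''
        SetD (2*k, Col.a) ((u : ℤ) - 1) ((v : ℤ) - 1) ((n : ℤ) - (2*k+2)))
      ((fun l => (2*k+2, Col.ab) :: (2*k, Col.b) :: l) ''
        SetD (2*k-1, Col.a) ((u : ℤ) - 1) ((v : ℤ) - 2) ((n : ℤ) - (4*k+2))) := by
    rw [Set.disjoint_left]
    rintro l ⟨l1, ⟨-, hbd, -⟩, rfl⟩ ⟨l2, -, heq⟩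
    obtain ⟨-, rfl⟩ : (2*k+2, Col.ab) = (2*k+2, Col.ab) ∧ (2*k, Col.b) :: l2 = l1 := by
      simpa using heq
    have h := hbd (2*k, Col.b) (by simp)
    have hv3 : colPos (2*k, Col.a) = 4*(2*k)-3 := rfl
    have hvb : colPos (2*k, Col.b) = 4*(2*k)-1 := rfl
    omega
  rw [dct_eq_ncard, dct_eq_ncard, dct_eq_ncard, dct_eq_ncard,
    main_split u v k n hk hn,
    Set.ncard_union_eq disj1 finA (finB.union finC),
    Set.ncard_union_eq disj2 finB finC,
    Set.ncard_image_of_injective _ injf,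
    Set.ncard_image_of_injective _ injg]
  ring
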